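/- If Deductive ASPIC⊖ satisfies non-interference under preferred semantics and is non-trivial under preferred semantics, then it satisfies crash-resistance under preferred semantics: there is no contaminating argumentation system. -/
import Mathlib


/-- Abstract setting for non-interference / crash-resistance: a type `AS` of argumentation
systems with an atom-set function, a union relation, and a preferred-conclusions operator
`C` assigning to each argumentation system a set of conclusion sets (sets of formulas).
`restr` restricts a set of conclusion sets elementwise to the formulas over a given atom set. -/
structure CRSetting where
  F : Type
  Atom : Type
  atomsF : F → Set Atom
  AS : Type
  atoms : AS → Set Atom
  /-- `IsUnion a₁ a₂ ap`: ap is a union of a₁ and a₂. -/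
  IsUnion : AS → AS → AS → Prop
  C : AS → Set (Set F)

namespace CRSetting

variable (S : CRSetting)

/-- The set of all atoms of the language. -/
def allAtoms : Set S.Atom := Set.univ

def SynDisj (a₁ a₂ : S.AS) : Prop := S.atoms a₁ ∩ S.atoms a₂ = ∅

def restr (Cs : Set (Set S.F)) (Δ : Set S.Atom) : Set (Set S.F) :=
  {Γ' | ∃ Γ ∈ Cs, Γ' = {φ ∈ Γ | S.atomsF φ ⊆ Δ}}

/-- Non-interference: combining syntactically disjoint systems does not change the
conclusions over the atoms of either of them. -/
def NonInterference : Prop :=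
  ∀ a₁ a₂ ap : S.AS, S.SynDisj a₁ a₂ → S.IsUnion a₁ a₂ ap →
    S.restr (S.C a₁) (S.atoms a₁) = S.restr (S.C ap) (S.atoms a₁) ∧
    S.restr (S.C a₂) (S.atoms a₂) = S.restr (S.C ap) (S.atoms a₂)

/-- Non-triviality: for every nonempty atom set Γ there are two argumentation systems over
exactly the atoms Γ whose restricted conclusion sets differ. -/
def NonTrivial : Prop :=
  ∀ Γ : Set S.Atom, Γ.Nonempty →
    ∃ a₁ a₂ : S.AS, S.atoms a₁ = Γ ∧ S.atoms a₂ = Γ ∧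
      S.restr (S.C a₁) Γ ≠ S.restr (S.C a₂) Γ

/-- A contaminating argumentation system. -/
def Contaminating (a : S.AS) : Prop :=
  S.atoms a ⊂ S.allAtoms ∧
  ∀ a' ap : S.AS, S.SynDisj a a' → S.IsUnion a a' ap → S.C a = S.C ap

/-- Crash-resistance: no contaminating argumentation system exists. -/
def CrashResistant : Prop := ¬ ∃ a : S.AS, S.Contaminating a

end CRSetting

/-- If Deductive ASPIC⊖ satisfies non-interference under preferred semantics and
is non-trivial under preferred semantics (and unions of syntactically disjoint systems exist),
then it satisfies crash-resistance under preferred semantics: there is no contaminating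
argumentation system. -/
theorem noninterference_implies_crash_resistance (S : CRSetting)
    (hUex : ∀ a₁ a₂ : S.AS, S.SynDisj a₁ a₂ → ∃ ap, S.IsUnion a₁ a₂ ap)
    (hNI : S.NonInterference) (hNT : S.NonTrivial) :
    S.CrashResistant := by
  rintro ⟨a, hsub, hcont⟩
  set Γ : Set S.Atom := (S.atoms a)ᶜ with hΓ
  have hΓne : Γ.Nonempty := by
    rcases Set.exists_of_ssubset hsub with ⟨x, _, hx⟩
    exact ⟨x, hx⟩
  obtain ⟨a₁, a₂, h1, h2, hne⟩ := hNT Γ hΓne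
  have hd1 : S.SynDisj a a₁ := by
    simp [CRSetting.SynDisj, h1, hΓ, Set.inter_compl_self]
  have hd2 : S.SynDisj a a₂ := by
    simp [CRSetting.SynDisj, h2, hΓ, Set.inter_compl_self]
  obtain ⟨p1, hp1⟩ := hUex a a₁ hd1
  obtain ⟨p2, hp2⟩ := hUex a a₂ hd2
  have e1 := (hNI a a₁ p1 hd1 hp1).2
  have e2 := (hNI a a₂ p2 hd2 hp2).2
  rw [h1, ← hcont a₁ p1 hd1 hp1] at e1
  rw [h2, ← hcont a₂ p2 hd2 hp2] at e2
  exact hne (e1.trans e2.symm)
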